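/- arXiv:1306.3087 — 2 statements merged into one kernel-verified Lean document; each statement's English description precedes it below -/
import Mathlib

section
/- Every finite connected simple graph that contains no induced 4-cycle C_4 and no induced path P_3 (the path with 3 edges) has a vertex adjacent to every other vertex (a dominating vertex). -/
open SimpleGraph Finset

/-- Every finite connected simple graph containing no induced 4-cycle C_4 and
no induced path P_3 (the path with 3 edges, i.e. `SimpleGraph.pathGraph 4` on
4 vertices) has a vertex adjacent to every other vertex. -/
theorem thinChordal_connected_has_dominating_vertex {V : Type*} [Fintype V]
    (G : SimpleGraph V) (hconn : G.Connected)
    (hC4 : IsEmpty (SimpleGraph.cycleGraph 4 ↪g G))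
    (hP3 : IsEmpty (SimpleGraph.pathGraph 4 ↪g G)) :
    ∃ z : V, ∀ v : V, v ≠ z → G.Adj z v := by
  classical
  have hne : Nonempty V := hconn.nonempty
  obtain ⟨z, -, hmax⟩ := Finset.exists_max_image Finset.univ (fun x => G.degree x)
    ⟨Classical.arbitrary V, Finset.mem_univ _⟩
  refine ⟨z, ?_⟩
  -- key configuration lemma
  have key : ∀ w v : V, G.Adj z w → G.Adj w v → ¬ G.Adj z v → v ≠ z → False := by
    intro w v hzw hwv hzv hvz
    by_cases hall : ∀ u, G.Adj z u → u ≠ w → G.Adj w u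
    · -- degree of w exceeds the maximal degree of z
      have hsub : insert z (insert v (G.neighborFinset z \ {w})) ⊆ G.neighborFinset w := by
        intro x hx
        simp only [Finset.mem_insert, Finset.mem_sdiff, Finset.mem_singleton,
          SimpleGraph.mem_neighborFinset] at hx ⊢
        rcases hx with rfl | rfl | ⟨hx1, hx2⟩
        · exact hzw.symm
        · exact hwv
        · exact hall x hx1 hx2
      have hwN : w ∈ G.neighborFinset z := by
        simpa [SimpleGraph.mem_neighborFinset] using hzw
      have hznot : z ∉ insert v (G.neighborFinset z \ {w}) := by
        simp only [Finset.mem_insert, Finset.mem_sdiff, Finset.mem_singleton,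
          SimpleGraph.mem_neighborFinset]
        push_neg
        exact ⟨fun h => hvz h.symm, fun h => absurd h (G.irrefl)⟩
      have hvnot : v ∉ G.neighborFinset z \ {w} := by
        simp only [Finset.mem_sdiff, SimpleGraph.mem_neighborFinset]
        intro h; exact hzv h.1
      have h1 : (G.neighborFinset z \ {w}).card = G.degree z - 1 := by
        rw [Finset.card_sdiff_of_subset (Finset.singleton_subset_iff.mpr hwN),
          Finset.card_singleton]
        rfl
      have hdeg1 : 1 ≤ G.degree z := Finset.card_pos.mpr ⟨w, hwN⟩
      have hcard : (insert z (insert v (G.neighborFinset z \ {w}))).card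
          = G.degree z + 1 := by
        rw [Finset.card_insert_of_notMem hznot, Finset.card_insert_of_notMem hvnot, h1]
        omega
      have hle1 : G.degree z + 1 ≤ G.degree w := by
        rw [← hcard]; exact Finset.card_le_card hsub
      have hle2 : G.degree w ≤ G.degree z := hmax w (Finset.mem_univ w)
      omega
    · push_neg at hall
      obtain ⟨u, hzu, huw, hwu⟩ := hall
      -- distinctness
      have huz : u ≠ z := fun h => G.irrefl (h ▸ hzu)
      have hwz : w ≠ z := (G.ne_of_adj hzw).symm
      have hwv' : w ≠ v := G.ne_of_adj hwv
      have huv : u ≠ v := fun h => hzv (h ▸ hzu)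
      have hinj : Function.Injective ![u, z, w, v] := by
        intro a b hab
        fin_cases a <;> fin_cases b <;>
          simp only [Matrix.cons_val_zero, Matrix.cons_val_one, Matrix.head_cons,
            Matrix.cons_val_two, Matrix.cons_val_three, Matrix.tail_cons,
            Matrix.head_fin_const, Fin.mk_zero, Fin.mk_one,
            show (⟨2, by norm_num⟩ : Fin 4) = 2 from rfl,
            show (⟨3, by norm_num⟩ : Fin 4) = 3 from rfl] at hab <;>
          first
            | rfl
            | exact absurd hab huz | exact absurd hab.symm huz
            | exact absurd hab huw | exact absurd hab.symm huw
            | exact absurd hab huv | exact absurd hab.symm huv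
            | exact absurd hab hwz | exact absurd hab.symm hwz
            | exact absurd hab.symm hvz | exact absurd hab hvz
            | exact absurd hab hwv' | exact absurd hab.symm hwv'
      by_cases huvadj : G.Adj u v
      · -- induced C4 on u,z,w,v
        refine hC4.false ⟨⟨![u, z, w, v], hinj⟩, ?_⟩
        intro a b
        fin_cases a <;> fin_cases b <;>
          simp only [show (⟨2, by norm_num⟩ : Fin 4) = 2 from rfl,
            show (⟨3, by norm_num⟩ : Fin 4) = 3 from rfl,
            Function.Embedding.coeFn_mk, Matrix.cons_val_zero,
            Matrix.cons_val_one, Matrix.head_cons, Matrix.cons_val_two,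
            Matrix.cons_val_three, Matrix.tail_cons, Matrix.head_fin_const,
            Fin.mk_zero, Fin.mk_one] <;>
          first
            | exact iff_of_true hzu.symm (by simp [SimpleGraph.cycleGraph_adj] <;> decide)
            | exact iff_of_true hzu (by simp [SimpleGraph.cycleGraph_adj] <;> decide)
            | exact iff_of_true hzw (by simp [SimpleGraph.cycleGraph_adj] <;> decide)
            | exact iff_of_true hzw.symm (by simp [SimpleGraph.cycleGraph_adj] <;> decide)
            | exact iff_of_true hwv (by simp [SimpleGraph.cycleGraph_adj] <;> decide)
            | exact iff_of_true hwv.symm (by simp [SimpleGraph.cycleGraph_adj] <;> decide)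
            | exact iff_of_true huvadj (by simp [SimpleGraph.cycleGraph_adj] <;> decide)
            | exact iff_of_true huvadj.symm (by simp [SimpleGraph.cycleGraph_adj] <;> decide)
            | exact iff_of_false hwu (by simp [SimpleGraph.cycleGraph_adj] <;> decide)
            | exact iff_of_false (fun h => hwu h.symm) (by simp [SimpleGraph.cycleGraph_adj] <;> decide)
            | exact iff_of_false hzv (by simp [SimpleGraph.cycleGraph_adj] <;> decide)
            | exact iff_of_false (fun h => hzv h.symm) (by simp [SimpleGraph.cycleGraph_adj] <;> decide)
            | exact iff_of_false (G.irrefl) (by simp [SimpleGraph.cycleGraph_adj] <;> decide)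
      · -- induced P3 (path on 4 vertices) u-z-w-v
        refine hP3.false ⟨⟨![u, z, w, v], hinj⟩, ?_⟩
        intro a b
        fin_cases a <;> fin_cases b <;>
          simp only [show (⟨2, by norm_num⟩ : Fin 4) = 2 from rfl,
            show (⟨3, by norm_num⟩ : Fin 4) = 3 from rfl,
            Function.Embedding.coeFn_mk, Matrix.cons_val_zero,
            Matrix.cons_val_one, Matrix.head_cons, Matrix.cons_val_two,
            Matrix.cons_val_three, Matrix.tail_cons, Matrix.head_fin_const,
            Fin.mk_zero, Fin.mk_one] <;>
          first
            | exact iff_of_true hzu.symm (by simp [SimpleGraph.pathGraph_adj] <;> decide)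
            | exact iff_of_true hzu (by simp [SimpleGraph.pathGraph_adj] <;> decide)
            | exact iff_of_true hzw (by simp [SimpleGraph.pathGraph_adj] <;> decide)
            | exact iff_of_true hzw.symm (by simp [SimpleGraph.pathGraph_adj] <;> decide)
            | exact iff_of_true hwv (by simp [SimpleGraph.pathGraph_adj] <;> decide)
            | exact iff_of_true hwv.symm (by simp [SimpleGraph.pathGraph_adj] <;> decide)
            | exact iff_of_false hwu (by simp [SimpleGraph.pathGraph_adj] <;> decide)
            | exact iff_of_false (fun h => hwu h.symm) (by simp [SimpleGraph.pathGraph_adj] <;> decide)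
            | exact iff_of_false hzv (by simp [SimpleGraph.pathGraph_adj] <;> decide)
            | exact iff_of_false (fun h => hzv h.symm) (by simp [SimpleGraph.pathGraph_adj] <;> decide)
            | exact iff_of_false huvadj (by simp [SimpleGraph.pathGraph_adj] <;> decide)
            | exact iff_of_false (fun h => huvadj h.symm) (by simp [SimpleGraph.pathGraph_adj] <;> decide)
            | exact iff_of_false (G.irrefl) (by simp [SimpleGraph.pathGraph_adj] <;> decide)
  -- now show z dominates, using walk induction
  intro v hvz
  by_contra hzv
  obtain ⟨p⟩ := hconn v z
  have main : ∀ n : ℕ, ∀ x : V, ∀ p : G.Walk x z, p.length = n → x = z ∨ G.Adj z x := by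
    intro n
    induction n with
    | zero =>
      intro x p hp
      exact Or.inl (SimpleGraph.Walk.eq_of_length_eq_zero hp)
    | succ n ih =>
      intro x p hp
      cases p with
      | nil => exact Or.inl rfl
      | @cons _ b _ h q =>
        rcases ih b q (by simpa using hp) with rfl | hzb
        · exact Or.inr h.symm
        · by_cases hza : G.Adj z x
          · exact Or.inr hza
          · by_cases hxz : x = z
            · exact Or.inl hxz
            · exact absurd (key b x hzb h.symm hza hxz) not_false
  rcases main p.length v p rfl with rfl | h
  · exact hvz rfl
  · exact hzv h
end

section
/- Any two reduced words representing the same element of a right-angled Artin group G(Γ) have the same length and involve the same set of generators (the same set of letters occurring, ignoring signs). -/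
open scoped commutatorElement

/-- The defining relators of the right-angled Artin group of a graph `G`:
commutators of pairs of adjacent vertices. -/
def raagRels {V : Type*} (G : SimpleGraph V) : Set (FreeGroup V) :=
  {r | ∃ x y : V, G.Adj x y ∧ r = ⁅FreeGroup.of x, FreeGroup.of y⁆}

/-- The right-angled Artin group (partially commutative group) of a graph. -/
abbrev Raag {V : Type*} (G : SimpleGraph V) : Type _ := PresentedGroup (raagRels G)

/-- The canonical generator of a RAAG corresponding to a vertex. -/
def Raag.gen {V : Type*} (G : SimpleGraph V) (x : V) : Raag G := PresentedGroup.of x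

/-- Evaluate a word in the generators (a list of vertices with signs) in the
right-angled Artin group of `G`. -/
def evalWord {V : Type*} (G : SimpleGraph V) (w : List (V × Bool)) : Raag G :=
  (w.map (fun p => if p.2 then Raag.gen G p.1 else (Raag.gen G p.1)⁻¹)).prod

/-- A word is reduced in G(Γ) if it has minimal length among all words
representing the same element. -/
def IsReducedWord {V : Type*} (G : SimpleGraph V) (w : List (V × Bool)) : Prop :=
  ∀ w' : List (V × Bool), evalWord G w' = evalWord G w → w.length ≤ w'.length

section Retraction

def raagRetractFun {V : Type*} (G : SimpleGraph V) (f : V → Bool) : V → Raag G :=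
  fun v => if f v then Raag.gen G v else 1

lemma raag_rel_holds {V : Type*} (G : SimpleGraph V) {x y : V} (hxy : G.Adj x y) :
    ⁅Raag.gen G x, Raag.gen G y⁆ = 1 := by
  have hmem : (⁅FreeGroup.of x, FreeGroup.of y⁆ : FreeGroup V) ∈
      Subgroup.normalClosure (raagRels G) :=
    Subgroup.subset_normalClosure ⟨x, y, hxy, rfl⟩
  have h1 : (PresentedGroup.mk (raagRels G)) ⁅FreeGroup.of x, FreeGroup.of y⁆ = 1 :=
    (QuotientGroup.eq_one_iff _).2 hmem
  rw [map_commutatorElement] at h1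
  exact h1

lemma raagRetract_rels {V : Type*} (G : SimpleGraph V) (f : V → Bool) :
    ∀ r ∈ raagRels G, FreeGroup.lift (raagRetractFun G f) r = 1 := by
  rintro r ⟨x, y, hxy, rfl⟩
  rw [map_commutatorElement, FreeGroup.lift_apply_of, FreeGroup.lift_apply_of]
  unfold raagRetractFun
  split_ifs with hx hy hy
  · exact raag_rel_holds G hxy
  all_goals simp [commutatorElement_def]

/-- The retraction of a RAAG killing generators where `f` is false. -/
def raagRetract {V : Type*} (G : SimpleGraph V) (f : V → Bool) :
    Raag G →* Raag G :=
  PresentedGroup.toGroup (raagRetract_rels G f)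

lemma raagRetract_gen {V : Type*} (G : SimpleGraph V) (f : V → Bool) (x : V) :
    raagRetract G f (Raag.gen G x) = if f x then Raag.gen G x else 1 :=
  PresentedGroup.toGroup.of (raagRetract_rels G f) (x := x)

lemma raagRetract_evalWord {V : Type*} (G : SimpleGraph V) (f : V → Bool)
    (w : List (V × Bool)) :
    raagRetract G f (evalWord G w) = evalWord G (w.filter (fun p => f p.1)) := by
  induction w with
  | nil => simp [evalWord]
  | cons p w ih =>
    have hcons : evalWord G (p :: w) =
        (if p.2 then Raag.gen G p.1 else (Raag.gen G p.1)⁻¹) * evalWord G w := by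
      simp [evalWord]
    rw [hcons, map_mul, ih, List.filter_cons]
    by_cases hp : f p.1 = true
    · rw [if_pos hp]
      have hsplit : evalWord G (p :: w.filter (fun p => f p.1)) =
          (if p.2 then Raag.gen G p.1 else (Raag.gen G p.1)⁻¹) *
            evalWord G (w.filter (fun p => f p.1)) := by
        simp [evalWord]
      rw [hsplit]
      congr 1
      by_cases hb : p.2 <;> simp [hb, raagRetract_gen, hp]
    · rw [if_neg hp]
      have h1 : raagRetract G f (if p.2 then Raag.gen G p.1 else (Raag.gen G p.1)⁻¹) = 1 := by
        by_cases hb : p.2 <;> simp [hb, raagRetract_gen, hp]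
      rw [h1, one_mul]

end Retraction

open Classical in
lemma support_subset {V : Type*} (G : SimpleGraph V)
    (w₁ w₂ : List (V × Bool)) (h₂ : IsReducedWord G w₂)
    (h : evalWord G w₁ = evalWord G w₂) (hlen : w₁.length = w₂.length) :
    {x : V | ∃ b, (x, b) ∈ w₁} ⊆ {x : V | ∃ b, (x, b) ∈ w₂} := by
  intro x ⟨b, hb⟩
  by_contra hx
  set f : V → Bool := fun v => decide (∃ c, (v, c) ∈ w₂) with hf
  have hfix : w₂.filter (fun p => f p.1) = w₂ := by
    apply List.filter_eq_self.2
    intro p hp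
    exact decide_eq_true ⟨p.2, hp⟩
  have heval : evalWord G (w₁.filter (fun p => f p.1)) = evalWord G w₂ := by
    have e1 := raagRetract_evalWord G f w₁
    have e2 := raagRetract_evalWord G f w₂
    rw [h, e2, hfix] at e1
    exact e1.symm
  have hlt : (w₁.filter (fun p => f p.1)).length < w₁.length := by
    refine List.length_filter_lt_length_iff_exists.2 ⟨(x, b), hb, ?_⟩
    simp only [hf, decide_eq_true_eq]
    exact hx
  have := h₂ _ heval
  omega

/-- Any two reduced words representing the same element of a right-angled
Artin group have the same length and involve the same set of generators. -/
theorem reduced_words_same_length_and_support {V : Type*} (G : SimpleGraph V)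
    (w₁ w₂ : List (V × Bool)) (h₁ : IsReducedWord G w₁) (h₂ : IsReducedWord G w₂)
    (h : evalWord G w₁ = evalWord G w₂) :
    w₁.length = w₂.length ∧
    {x : V | ∃ b, (x, b) ∈ w₁} = {x : V | ∃ b, (x, b) ∈ w₂} := by
  have hlen : w₁.length = w₂.length :=
    le_antisymm (h₁ w₂ h.symm) (h₂ w₁ h)
  exact ⟨hlen, Set.Subset.antisymm
    (support_subset G w₁ w₂ h₂ h hlen)
    (support_subset G w₂ w₁ h₁ h.symm hlen.symm)⟩
end
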